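/- Let O be a discrete valuation ring with uniformiser ϖ, and let R be an O-algebra which is ϖ-torsion-free (so R injects into R[1/ϖ]). Assume R/ϖR is reduced. Then every idempotent e of R[1/ϖ] (e² = e) lies in the image of R in R[1/ϖ]. -/

import Mathlib

/-- if `O` is a DVR with uniformiser `ϖ`, `R` a `ϖ`-torsion-free `O`-algebra
with `R/ϖR` reduced, then every idempotent of `R[1/ϖ]` lies in the image of `R`. -/
theorem stmt10 (O : Type) [CommRing O] [IsDomain O] [IsDiscreteValuationRing O]
    (ϖ : O) (hϖ : Irreducible ϖ)
    (R : Type) [CommRing R] [Algebra O R]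
    (htf : ∀ r : R, algebraMap O R ϖ * r = 0 → r = 0)
    (hred : IsReduced (R ⧸ Ideal.span {algebraMap O R ϖ}))
    (e : Localization.Away (algebraMap O R ϖ)) (he : e * e = e) :
    ∃ r : R, algebraMap R (Localization.Away (algebraMap O R ϖ)) r = e := by
  revert he
  revert e
  set π := algebraMap O R ϖ with hπdef
  intro e he
  set f := algebraMap R (Localization.Away π) with hfdef
  have hπreg : π ∈ nonZeroDivisors R := mem_nonZeroDivisors_iff_right.mpr fun r hr => htf r (by rwa [mul_comm] at hr)
  have hM : Submonoid.powers π ≤ nonZeroDivisors R := by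
    rintro x ⟨n, rfl⟩
    exact pow_mem hπreg n
  have hinj : Function.Injective f := IsLocalization.injective (Localization.Away π) hM
  have hunit : IsUnit (f π) :=
    IsLocalization.map_units (Localization.Away π) ⟨π, Submonoid.mem_powers π⟩
  have key : ∀ n : ℕ, ∀ r : R, f r = (f π) ^ n * e → ∃ r' : R, f r' = e := by
    intro n
    induction n with
    | zero => intro r h; exact ⟨r, by simpa using h⟩
    | succ n ih =>
      intro r h
      have hr2 : r * r = π ^ (n + 1) * r := by
        apply hinj
        calc f (r * r) = ((f π) ^ (n + 1) * e) * ((f π) ^ (n + 1) * e) := by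
              rw [map_mul, h]
          _ = (f π) ^ (n + 1) * ((f π) ^ (n + 1) * (e * e)) := by ring
          _ = f (π ^ (n + 1) * r) := by rw [he, map_mul, map_pow, h]
      -- reduce mod π
      set q := Ideal.Quotient.mk (Ideal.span {π}) with hqdef
      have hq0 : q r * q r = 0 := by
        rw [← map_mul, hr2, map_mul]
        have : q (π ^ (n + 1)) = 0 := by
          rw [Ideal.Quotient.eq_zero_iff_mem]
          exact Ideal.pow_mem_of_mem _ (Ideal.mem_span_singleton_self π) _ (Nat.succ_pos n)
        rw [this, zero_mul]
      have hqr : q r = 0 := by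
        have : IsNilpotent (q r) := ⟨2, by rw [pow_two]; exact hq0⟩
        exact hred.eq_zero _ this
      have hrmem : r ∈ Ideal.span {π} := by rwa [← Ideal.Quotient.eq_zero_iff_mem]
      obtain ⟨r', hr'⟩ := Ideal.mem_span_singleton.mp hrmem
      refine ih r' ?_
      have : f π * f r' = f π * ((f π) ^ n * e) := by
        rw [← map_mul, ← hr', h, pow_succ]
        ring
      exact hunit.mul_left_cancel this
  obtain ⟨⟨r, s⟩, hs⟩ := IsLocalization.surj (Submonoid.powers π) e
  obtain ⟨n, hn⟩ := s.2
  refine key n r ?_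
  rw [← hs]
  have : (s : R) = π ^ n := hn.symm
  rw [this, map_pow]
  ring
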